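/- Let B be a unital C*-algebra, a ∈ B, and (p_i)_{i∈ℕ} a sequence of nonzero mutually orthogonal projections in B satisfying conditions (1)–(4). Then the spectrum of a in B satisfies σ_B(a) ⊆ (∪_{i=1}^∞ σ_{p_i B p_i}(p_i a p_i)) ∪ {0}. -/
import Mathlib


/-- The smallest norm-closed star-subalgebra of `B` containing `S`. -/
def cstarGen {B : Type*} [NonUnitalCStarAlgebra B] (S : Set B) : Set B :=
  closure ((NonUnitalStarAlgebra.adjoin ℂ S : NonUnitalStarSubalgebra ℂ B) : Set B)

/-- `x` is invertible in the corner algebra `pBp` (with unit `p`). -/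
def cornerInvertible {B : Type*} [CStarAlgebra B] (p x : B) : Prop :=
  ∃ y : B, p * y * p = y ∧ x * y = p ∧ y * x = p

/-- The spectrum of `x ∈ pBp` in the unital algebra `pBp` (with unit `p`). -/
def cornerSpectrum {B : Type*} [CStarAlgebra B] (p x : B) : Set ℂ :=
  {z : ℂ | ¬ cornerInvertible p (x - z • p)}

theorem cornerInvertible_add {B : Type*} [CStarAlgebra B] (P q x : B)
    (hPP : P * P = P) (hqq : q * q = q)
    (hPq : P * q = 0) (hqP : q * P = 0)
    (hP : cornerInvertible P (P * x * P)) (hq : cornerInvertible q (q * x * q))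
    (hcross : q * x * P = 0) :
    cornerInvertible (P + q) ((P + q) * x * (P + q)) := by
  obtain ⟨u, huc, hu1, hu2⟩ := hP
  obtain ⟨w, hwc, hw1, hw2⟩ := hq
  have hPu : P * u = u := by rw [← huc, ← mul_assoc, ← mul_assoc, hPP]
  have huP : u * P = u := by rw [← huc, mul_assoc, mul_assoc, hPP, ← mul_assoc]
  have hqw : q * w = w := by rw [← hwc, ← mul_assoc, ← mul_assoc, hqq]
  have hwq : w * q = w := by rw [← hwc, mul_assoc, mul_assoc, hqq, ← mul_assoc]
  have hqu : q * u = 0 := by rw [← hPu, ← mul_assoc, hqP, zero_mul]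
  have huq : u * q = 0 := by rw [← huP, mul_assoc, hPq, mul_zero]
  have hPw : P * w = 0 := by rw [← hqw, ← mul_assoc, hPq, zero_mul]
  have hwP : w * P = 0 := by rw [← hwq, mul_assoc, hqP, mul_zero]
  have hxu : P * x * u = P := by rw [← hPu, ← mul_assoc]; exact hu1
  have hux : u * x * P = P := by rw [← mul_assoc, ← mul_assoc, huP] at hu2; exact hu2
  have hxw : q * x * w = q := by rw [← hqw, ← mul_assoc]; exact hw1
  have hwx : w * x * q = q := by rw [← mul_assoc, ← mul_assoc, hwq] at hw2; exact hw2
  have hqxu : q * x * u = 0 := by rw [← hPu, ← mul_assoc, hcross, zero_mul]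
  have hwxP : w * x * P = 0 := by
    have e : w * x * P = w * q * x * P := by rw [hwq]
    rw [e, mul_assoc w q x, mul_assoc w (q*x) P, hcross, mul_zero]
  have lPP : ∀ r : B, P*(P*r) = P*r := fun r => by rw [← mul_assoc, hPP]
  have lqq : ∀ r : B, q*(q*r) = q*r := fun r => by rw [← mul_assoc, hqq]
  have lPq : ∀ r : B, P*(q*r) = 0 := fun r => by rw [← mul_assoc, hPq, zero_mul]
  have lqP : ∀ r : B, q*(P*r) = 0 := fun r => by rw [← mul_assoc, hqP, zero_mul]
  have lPu : ∀ r : B, P*(u*r) = u*r := fun r => by rw [← mul_assoc, hPu]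
  have luP : ∀ r : B, u*(P*r) = u*r := fun r => by rw [← mul_assoc, huP]
  have lqw : ∀ r : B, q*(w*r) = w*r := fun r => by rw [← mul_assoc, hqw]
  have lwq : ∀ r : B, w*(q*r) = w*r := fun r => by rw [← mul_assoc, hwq]
  have lqu : ∀ r : B, q*(u*r) = 0 := fun r => by rw [← mul_assoc, hqu, zero_mul]
  have luq : ∀ r : B, u*(q*r) = 0 := fun r => by rw [← mul_assoc, huq, zero_mul]
  have lPw : ∀ r : B, P*(w*r) = 0 := fun r => by rw [← mul_assoc, hPw, zero_mul]
  have lwP : ∀ r : B, w*(P*r) = 0 := fun r => by rw [← mul_assoc, hwP, zero_mul]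
  have lxu : ∀ r : B, P*(x*(u*r)) = P*r := fun r => by rw [← mul_assoc, ← mul_assoc, hxu]
  have lux : ∀ r : B, u*(x*(P*r)) = P*r := fun r => by rw [← mul_assoc, ← mul_assoc, hux]
  have lxw : ∀ r : B, q*(x*(w*r)) = q*r := fun r => by rw [← mul_assoc, ← mul_assoc, hxw]
  have lwx : ∀ r : B, w*(x*(q*r)) = q*r := fun r => by rw [← mul_assoc, ← mul_assoc, hwx]
  have lqxu : ∀ r : B, q*(x*(u*r)) = 0 := fun r => by rw [← mul_assoc, ← mul_assoc, hqxu, zero_mul]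
  have lwxP : ∀ r : B, w*(x*(P*r)) = 0 := fun r => by rw [← mul_assoc, ← mul_assoc, hwxP, zero_mul]
  have lcross : ∀ r : B, q*(x*(P*r)) = 0 := fun r => by rw [← mul_assoc, ← mul_assoc, hcross, zero_mul]
  have pxu : P*(x*u) = P := by rw [← mul_assoc]; exact hxu
  have pux : u*(x*P) = P := by rw [← mul_assoc]; exact hux
  have pxw : q*(x*w) = q := by rw [← mul_assoc]; exact hxw
  have pwx : w*(x*q) = q := by rw [← mul_assoc]; exact hwx
  have pqxu : q*(x*u) = 0 := by rw [← mul_assoc]; exact hqxu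
  have pwxP : w*(x*P) = 0 := by rw [← mul_assoc]; exact hwxP
  have pcross : q*(x*P) = 0 := by rw [← mul_assoc]; exact hcross
  refine ⟨u + w - u*x*w, ?_, ?_, ?_⟩ <;>
  · simp only [mul_add, add_mul, mul_sub, sub_mul, mul_assoc]
    simp only [lPP, lqq, lPq, lqP, lPu, luP, lqw, lwq, lqu, luq, lPw, lwP, lxu, lux, lxw, lwx,
      lqxu, lwxP, lcross, pxu, pux, pxw, pwx, pqxu, pwxP, pcross, hPu, huP, hqw, hwq, hqu, huq,
      hPw, hwP, hPP, hqq, hPq, hqP, mul_zero, zero_mul, add_zero, zero_add, sub_zero, zero_sub]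
    abel


theorem spectrum_subset_iUnion_cornerSpectrum
    {B : Type*} [CStarAlgebra B] (a : B) (p : ℕ → B)
    (hsa : ∀ i, IsSelfAdjoint (p i)) (hidem : ∀ i, p i * p i = p i)
    (hne : ∀ i, p i ≠ 0)
    (horth : ∀ i i', i ≠ i' → p i * p i' = 0)
    (h1 : ∀ n : ℕ,
      (1 - ∑ i ∈ Finset.range n, p i) * a * (∑ i ∈ Finset.range n, p i) = 0)
    (h2 : Filter.Tendsto
      (fun n : ℕ => ‖(1 - ∑ i ∈ Finset.range n, p i) * a * (1 - ∑ i ∈ Finset.range n, p i)‖)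
      Filter.atTop (nhds 0))
    (h3 : ∀ i i', i ≠ i' →
      cornerSpectrum (p i) (p i * a * p i) ∩ cornerSpectrum (p i') (p i' * a * p i') = ∅)
    (h4 : ∀ i, cornerInvertible (p i) (p i * a * p i)) :
    spectrum ℂ a ⊆ (⋃ i : ℕ, cornerSpectrum (p i) (p i * a * p i)) ∪ {0} := by
  intro z hz
  by_contra hmem
  rw [Set.mem_union, not_or] at hmem
  obtain ⟨hm1, hm2⟩ := hmem
  have hz0 : z ≠ 0 := fun h => hm2 (by simp [h])
  simp only [Set.mem_iUnion, not_exists] at hm1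
  have hinv : ∀ i, cornerInvertible (p i) (p i * a * p i - z • p i) := by
    intro i
    have := hm1 i
    simpa [cornerSpectrum, not_not] using this
  set x : B := a - z • (1 : B) with hxdef
  have hxform : ∀ e f : B, e * x * f = e * a * f - z • (e * f) := by
    intro e f
    simp only [hxdef, mul_sub, sub_mul, mul_smul_comm, smul_mul_assoc, mul_one]
  set S : ℕ → B := fun n => ∑ i ∈ Finset.range n, p i with hSdef
  have h1' : ∀ n, (1 - S n) * a * S n = 0 := h1
  have hSS : ∀ n, S n * S n = S n := by
    intro n
    rw [hSdef]
    simp only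
    rw [Finset.sum_mul_sum]
    refine Finset.sum_congr rfl fun i hi => ?_
    rw [Finset.sum_eq_single i (fun j _ hj => horth i j (Ne.symm hj)) (fun h => absurd hi h)]
    exact hidem i
  have hpS : ∀ n, p n * S n = 0 := by
    intro n
    rw [hSdef]
    simp only
    rw [Finset.mul_sum]
    exact Finset.sum_eq_zero fun i hi => horth n i (Finset.mem_range.mp hi).ne'
  have hSp : ∀ n, S n * p n = 0 := by
    intro n
    rw [hSdef]
    simp only
    rw [Finset.sum_mul]
    exact Finset.sum_eq_zero fun i hi => horth i n (Finset.mem_range.mp hi).ne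
  -- corner invertibility on the finite upper-left block, by induction
  have key : ∀ n, cornerInvertible (S n) (S n * x * S n) := by
    intro n
    induction n with
    | zero => exact ⟨0, by simp [hSdef]⟩
    | succ m ih =>
      have hstep : S (m + 1) = S m + p m := by rw [hSdef]; exact Finset.sum_range_succ p m
      rw [hstep]
      refine cornerInvertible_add (S m) (p m) x (hSS m) (hidem m) (hSp m) (hpS m) ih ?_ ?_
      · have e1 : p m * x * p m = p m * a * p m - z • p m := by
          rw [hxform, hidem]
        rw [e1]; exact hinv m
      · have e3 : p m * (1 - S m) = p m := by rw [mul_sub, mul_one, hpS, sub_zero]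
        have e2 : p m * a * S m = 0 := by
          conv_lhs => rw [← e3]
          rw [mul_assoc (p m) (1 - S m) a, mul_assoc (p m) ((1 - S m) * a) (S m),
            h1' m, mul_zero]
        rw [hxform, e2, hpS, smul_zero, sub_zero]
  -- choose n with small tail
  have hzpos : (0:ℝ) < ‖z‖ := norm_pos_iff.mpr hz0
  obtain ⟨n, hn⟩ := (h2.eventually (gt_mem_nhds hzpos)).exists
  set Q : B := 1 - S n with hQdef
  have hb : ‖Q * a * Q‖ < ‖z‖ := hn
  have hQQ : Q * Q = Q := by
    rw [hQdef, sub_mul, one_mul, mul_sub, mul_one, hSS n, sub_self, sub_zero]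
  have hSQ : S n * Q = 0 := by rw [hQdef, mul_sub, mul_one, hSS n, sub_self]
  have hQS : Q * S n = 0 := by rw [hQdef, sub_mul, one_mul, hSS n, sub_self]
  have hQa : Q * a * S n = 0 := h1' n
  have hcrossQ : Q * x * S n = 0 := by rw [hxform, hQa, hQS, smul_zero, sub_zero]
  have hQxQ : Q * x * Q = Q * a * Q - z • Q := by rw [hxform, hQQ]
  -- invert the tail block
  have : Nontrivial B := ⟨⟨p 0, 0, hne 0⟩⟩
  have hzspec : z ∉ spectrum ℂ (Q * a * Q) := fun hmem =>
    absurd (spectrum.norm_le_norm_of_mem hmem) (not_le.mpr hb)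
  have hU : IsUnit ((algebraMap ℂ B) z - Q * a * Q) := spectrum.notMem_iff.mp hzspec
  rw [Algebra.algebraMap_eq_smul_one] at hU
  set d : B := z • (1 : B) - Q * a * Q with hddef
  obtain ⟨v, hv⟩ := hU
  set c : B := (↑v⁻¹ : B) with hcdef
  have hdc : d * c = 1 := by rw [hcdef, ← hv]; exact v.mul_inv
  have hcd : c * d = 1 := by rw [hcdef, ← hv]; exact v.inv_mul
  have hbQ : (Q * a * Q) * Q = Q * a * Q := by rw [mul_assoc (Q * a) Q Q, hQQ]
  have hQb : Q * (Q * a * Q) = Q * a * Q := by rw [← mul_assoc, ← mul_assoc, hQQ]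
  have hdQ : d * Q = Q * d := by
    have e1 : d * Q = z • Q - Q * a * Q := by
      rw [hddef, sub_mul, smul_mul_assoc, one_mul, hbQ]
    have e2 : Q * d = z • Q - Q * a * Q := by
      rw [hddef, mul_sub, mul_smul_comm, mul_one, hQb]
    rw [e1, e2]
  have hQc : Q * c = c * Q := by
    rw [← one_mul (Q * c), ← hcd, mul_assoc c d (Q * c), ← mul_assoc d Q c, hdQ,
      mul_assoc Q d c, hdc, mul_one]
  have eQcQ : Q * (c * Q) = c * Q := by rw [← mul_assoc, hQc, mul_assoc, hQQ]
  have eQdQ : Q * (d * Q) = d * Q := by rw [← mul_assoc, ← hdQ, mul_assoc, hQQ]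
  have hQxQ' : Q * x * Q = -(d * Q) := by
    have : d * Q = z • Q - Q * a * Q := by
      rw [hddef, sub_mul, smul_mul_assoc, one_mul, hbQ]
    rw [hQxQ, this, neg_sub]
  have hQcorner : cornerInvertible Q (Q * x * Q) := by
    refine ⟨-(c * Q), ?_, ?_, ?_⟩
    · simp only [mul_neg, neg_mul, neg_inj]
      rw [eQcQ, mul_assoc, hQQ]
    · rw [hQxQ', neg_mul_neg, mul_assoc d Q (c * Q), eQcQ, ← mul_assoc d c Q, hdc, one_mul]
    · rw [hQxQ', neg_mul_neg, mul_assoc c Q (d * Q), eQdQ, ← mul_assoc c d Q, hcd, one_mul]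
  have hfinal := cornerInvertible_add (S n) Q x (hSS n) hQQ hSQ hQS (key n) hQcorner hcrossQ
  have hone : S n + Q = 1 := by rw [hQdef]; abel
  rw [hone, one_mul, mul_one] at hfinal
  obtain ⟨y, -, hy1, hy2⟩ := hfinal
  have hxUnit : IsUnit x := isUnit_iff_exists.mpr ⟨y, hy1, hy2⟩
  refine (spectrum.mem_iff.mp hz) ?_
  rw [Algebra.algebraMap_eq_smul_one, show z • (1:B) - a = -x by rw [hxdef, neg_sub]]
  exact hxUnit.neg
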